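/- Fix a monomial order ⪯ on ℕ^d, a finitely generated cone C, m ∈ C \ {0}, and assume {x ∈ C : x ≺ f} is finite for all f ∈ C. Then S_m = {x ∈ C : x ⪰ m} ∪ {0} is a C-semigroup with multiplicity m, and every C-semigroup with multiplicity m is contained in C and contains no nonzero element ≺ m; in particular S_m is the unique maximal (under inclusion) C-semigroup of multiplicity m. -/
import Mathlib


/-- A monomial order on `ℕ^d`: a total order compatible with addition,
with `0` as least element. -/
def IsMonomialOrder (d : ℕ) (le : (Fin d → ℕ) → (Fin d → ℕ) → Prop) : Prop :=
  (∀ a, le a a) ∧ (∀ a b, le a b → le b a → a = b) ∧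
  (∀ a b c, le a b → le b c → le a c) ∧ (∀ a b, le a b ∨ le b a) ∧
  (∀ a b c, le a b → le (a + c) (b + c)) ∧ (∀ a, le 0 a)

/-- `S` is a `C`-semigroup: a submonoid of the cone `C` with finite complement in `C`. -/
def IsCSgp {d : ℕ} (C : AddSubmonoid (Fin d → ℕ)) (S : Set (Fin d → ℕ)) : Prop :=
  0 ∈ S ∧ (∀ x ∈ S, ∀ y ∈ S, x + y ∈ S) ∧ S ⊆ (C : Set (Fin d → ℕ)) ∧
    ((C : Set (Fin d → ℕ)) \ S).Finite

/-- `S` is a `P`-semigroup: for every nonzero `s ∈ S` there is `p ∈ P` with `s + p ∈ S`. -/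
def IsPSgp {d : ℕ} (P : Set (Fin d → ℕ)) (S : Set (Fin d → ℕ)) : Prop :=
  ∀ s ∈ S, s ≠ 0 → ∃ p ∈ P, s + p ∈ S

/-- `a` is a minimal generator of `S`. -/
def IsMinGen {d : ℕ} (S : Set (Fin d → ℕ)) (a : Fin d → ℕ) : Prop :=
  a ∈ S ∧ a ≠ 0 ∧ ¬ ∃ x ∈ S, ∃ y ∈ S, x ≠ 0 ∧ y ≠ 0 ∧ a = x + y

theorem stmt_18 {d : ℕ} (C : AddSubmonoid (Fin d → ℕ)) (hCfg : C.FG)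
    (le : (Fin d → ℕ) → (Fin d → ℕ) → Prop) (hle : IsMonomialOrder d le)
    (hlow : ∀ f ∈ (C : Set (Fin d → ℕ)),
      {x ∈ (C : Set (Fin d → ℕ)) | le x f ∧ x ≠ f}.Finite)
    (m : Fin d → ℕ) (hmC : m ∈ (C : Set (Fin d → ℕ))) (hm0 : m ≠ 0) :
    IsCSgp C ({x ∈ (C : Set (Fin d → ℕ)) | le m x} ∪ {0}) ∧
      (m ∈ ({x ∈ (C : Set (Fin d → ℕ)) | le m x} ∪ {0}) ∧
        ∀ s ∈ ({x ∈ (C : Set (Fin d → ℕ)) | le m x} ∪ {0}), s ≠ 0 → le m s) ∧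
      ∀ T : Set (Fin d → ℕ), IsCSgp C T →
        (m ∈ T ∧ ∀ s ∈ T, s ≠ 0 → le m s) →
        T ⊆ ({x ∈ (C : Set (Fin d → ℕ)) | le m x} ∪ {0}) := by
  obtain ⟨hrefl, hanti, htrans, htot, hadd, hzero⟩ := hle
  refine ⟨⟨Or.inr rfl, ?_, ?_, ?_⟩, ⟨Or.inl ⟨hmC, hrefl m⟩, ?_⟩, ?_⟩
  · rintro x (⟨hxC, hmx⟩ | hx0) y (⟨hyC, hmy⟩ | hy0)
    · exact Or.inl ⟨C.add_mem hxC hyC, htrans m x (x + y) hmx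
        (by simpa [add_comm] using hadd 0 y x (hzero y))⟩
    · simp only [Set.mem_singleton_iff] at hy0; subst hy0
      exact Or.inl (by simpa using ⟨hxC, hmx⟩)
    · simp only [Set.mem_singleton_iff] at hx0; subst hx0
      exact Or.inl (by simpa using ⟨hyC, hmy⟩)
    · simp only [Set.mem_singleton_iff] at hx0 hy0; subst hx0; subst hy0
      exact Or.inr (by simp)
  · rintro x (⟨hxC, _⟩ | hx0)
    · exact hxC
    · simp only [Set.mem_singleton_iff] at hx0; subst hx0; exact C.zero_mem
  · refine (hlow m hmC).subset ?_
    rintro x ⟨hxC, hx⟩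
    simp only [Set.mem_union, Set.mem_setOf_eq, Set.mem_singleton_iff, not_or] at hx
    refine ⟨hxC, ?_, fun h => hx.1 ⟨hxC, h ▸ hrefl m⟩⟩
    rcases htot m x with h | h
    · exact absurd ⟨hxC, h⟩ hx.1
    · exact h
  · rintro s (⟨_, hms⟩ | hs0) hs
    · exact hms
    · simp only [Set.mem_singleton_iff] at hs0; exact absurd hs0 hs
  · rintro T ⟨_, _, hTC, _⟩ ⟨_, hTmin⟩ s hsT
    by_cases hs0 : s = 0
    · exact Or.inr (by simp [hs0])
    · exact Or.inl ⟨hTC hsT, hTmin s hsT hs0⟩
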